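/- Conversely, in any regular tree grammar, if a rule sequence generates the tree x(y₁,…,y_k) from nonterminal A, then its first rule is of the form A → x(B₁,…,B_k) for some nonterminals B₁,…,B_k, and the remainder of the sequence decomposes as a concatenation r̄₁, …, r̄_k where r̄_j generates y_j from B_j for each j. -/
import Mathlib


structure Rule (N : Type) (α : Type) where
  lhs : N
  sym : α
  rhs : List N
deriving DecidableEq

inductive RTree (α : Type) where
  | node : α → List (RTree α) → RTree α

def RTree.size {α : Type} : RTree α → Nat
  | .node _ ys => 1 + (ys.attach.map (fun y => RTree.size y.1)).sum
decreasing_by have := List.sizeOf_lt_of_mem y.2; simp only [RTree.node.sizeOf_spec]; omega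

def RTree.children {α : Type} : RTree α → List (RTree α)
  | .node _ ys => ys

def RTree.root {α : Type} : RTree α → α
  | .node x _ => x

def RTree.dfs {α : Type} : RTree α → List (RTree α)
  | .node x ys => (ys.attach.map (fun y => RTree.dfs y.1)).flatten ++ [.node x ys]
decreasing_by have := List.sizeOf_lt_of_mem y.2; simp only [RTree.node.sizeOf_spec]; omega

inductive GenList {N α : Type} (R : Set (Rule N α)) :
    List (Rule N α) → List N → List (RTree α) → Prop where
  | nil : GenList R [] [] []
  | step {r : Rule N α} {rs : List (Rule N α)} {stack : List N}
      {ys ts : List (RTree α)} :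
      r ∈ R →
      ys.length = r.rhs.length →
      GenList R rs (r.rhs ++ stack) (ys ++ ts) →
      GenList R (r :: rs) (r.lhs :: stack) (RTree.node r.sym ys :: ts)

def GenSeq {N α : Type} (R : Set (Rule N α)) (rs : List (Rule N α))
    (A : N) (t : RTree α) : Prop :=
  GenList R rs [A] [t]

def Lang {N α : Type} (R : Set (Rule N α)) (A : N) : Set (RTree α) :=
  {t | ∃ rs, GenSeq R rs A t}

def LangN {N α : Type} (R : Set (Rule N α)) (A : N) (n : Nat) : Set (RTree α) :=
  {t ∈ Lang R A | t.size ≤ n}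

def Deterministic {N α : Type} (R : Set (Rule N α)) : Prop :=
  ∀ r ∈ R, ∀ r' ∈ R, r.sym = r'.sym → r.rhs = r'.rhs → r = r'

def parse {N α : Type} [DecidableEq N] [DecidableEq α] (R : List (Rule N α)) :
    RTree α → Option (N × List (Rule N α))
  | RTree.node x ys => do
    let res ← ys.attach.mapM (fun y => parse R y.1)
    match R.find? (fun r => r.sym == x && r.rhs == res.map Prod.fst) with
    | some r => some (r.lhs, r :: (res.map Prod.snd).flatten)
    | none => none
decreasing_by have := List.sizeOf_lt_of_mem y.2; simp only [RTree.node.sizeOf_spec]; omega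

lemma genlist_split' {N α : Type} {R : Set (Rule N α)} {rs : List (Rule N α)}
    {st : List N} {ts : List (RTree α)} (h : GenList R rs st ts) :
    ∀ s1 s2 t1 t2, st = s1 ++ s2 → ts = t1 ++ t2 → s1.length = t1.length →
    ∃ rs1 rs2, rs = rs1 ++ rs2 ∧ GenList R rs1 s1 t1 ∧ GenList R rs2 s2 t2 := by
  induction h with
  | nil =>
    intro s1 s2 t1 t2 hs ht hl
    have hs1 : s1 = [] := by cases s1 <;> simp_all
    have hs2 : s2 = [] := by cases s1 <;> simp_all
    subst hs1 hs2
    have ht1 : t1 = [] := by cases t1 <;> simp_all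
    subst ht1
    simp at ht; subst ht
    exact ⟨[], [], rfl, .nil, .nil⟩
  | @step r rs stack ys ts hr hlen hgen ih =>
    intro s1 s2 t1 t2 hs ht hl
    cases s1 with
    | nil =>
      have ht1 : t1 = [] := by cases t1 <;> simp_all
      subst ht1
      simp at ht hs; subst ht hs
      exact ⟨[], _, rfl, .nil, .step hr hlen hgen⟩
    | cons B s1' =>
      cases t1 with
      | nil => simp at hl
      | cons t t1' =>
        simp at hs ht hl
        obtain ⟨hB, hstack⟩ := hs
        obtain ⟨htt, hts⟩ := ht
        obtain ⟨rs1, rs2, hrs, hg1, hg2⟩ :=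
          ih (r.rhs ++ s1') s2 (ys ++ t1') t2
            (by rw [hstack, List.append_assoc]) (by rw [hts, List.append_assoc])
            (by simp [hlen, hl])
        refine ⟨r :: rs1, rs2, by simp [hrs], ?_, hg2⟩
        rw [← hB, ← htt]
        exact .step hr hlen hg1

lemma genlist_nil {N α : Type} {R : Set (Rule N α)} {rs : List (Rule N α)}
    (h : GenList R rs [] []) : rs = [] := by
  cases h; rfl

lemma genlist_decompose {N α : Type} {R : Set (Rule N α)} :
    ∀ (Bs : List N) (rs : List (Rule N α)) (ys : List (RTree α)),
    GenList R rs Bs ys → Bs.length = ys.length →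
    ∃ rss : List (List (Rule N α)), rs = rss.flatten ∧ Bs.length = rss.length ∧
      List.Forall₂ (fun (p : N × List (Rule N α)) (y : RTree α) =>
        GenSeq R p.2 p.1 y) (Bs.zip rss) ys := by
  intro Bs
  induction Bs with
  | nil =>
    intro rs ys h hl
    have : ys = [] := by cases ys <;> simp_all
    subst this
    exact ⟨[], genlist_nil h, rfl, .nil⟩
  | cons B Bs' ih =>
    intro rs ys h hl
    cases ys with
    | nil => simp at hl
    | cons y ys' =>
      obtain ⟨rs1, rs2, hrs, hg1, hg2⟩ :=
        genlist_split' h [B] Bs' [y] ys' rfl rfl rfl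
      obtain ⟨rss', hrs', hlen', hfa⟩ := ih rs2 ys' hg2 (by simpa using hl)
      exact ⟨rs1 :: rss', by simp [hrs, hrs'], by simp [hlen'],
        .cons hg1 hfa⟩

theorem stmt9 {N alpha : Type} (R : Set (Rule N alpha))
    (rs : List (Rule N alpha)) (A : N) (x : alpha) (ys : List (RTree alpha))
    (h : GenSeq R rs A (RTree.node x ys)) :
    ∃ (Bs : List N) (rss : List (List (Rule N alpha))),
      Rule.mk A x Bs ∈ R ∧ rs = Rule.mk A x Bs :: rss.flatten ∧
      Bs.length = rss.length ∧
      List.Forall₂ (fun (p : N × List (Rule N alpha)) (y : RTree alpha) =>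
        GenSeq R p.2 p.1 y) (Bs.zip rss) ys := by
  cases h with
  | @step r rs' stack ys' ts hr hlen hgen =>
    simp only [List.append_nil] at hgen
    obtain ⟨rss, hrs, hlen', hfa⟩ :=
      genlist_decompose r.rhs rs' ys hgen hlen.symm
    exact ⟨r.rhs, rss, hr, by simp [hrs], hlen', hfa⟩
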